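/- Let n ≥ 2 and let S ⊂ ℝ^n be a bounded Borel set with 0 < H^{n-1}(S) < ∞. Then there exists a constant C > 0 such that for every rotation R ∈ SO(n) and every vector c ∈ ℝ^n one has |R − Id| + |c| ≤ C ∫_S |Rx − x − c| dH^{n-1}(x). -/

import Mathlib

open MeasureTheory Filter Matrix

noncomputable def frobSq {n : ℕ} (X : Matrix (Fin n) (Fin n) ℝ) : ℝ := ∑ i, ∑ j, (X i j)^2
noncomputable def frob {n : ℕ} (X : Matrix (Fin n) (Fin n) ℝ) : ℝ := Real.sqrt (frobSq X)
noncomputable def msym {n : ℕ} (X : Matrix (Fin n) (Fin n) ℝ) : Matrix (Fin n) (Fin n) ℝ :=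
  (1/2 : ℝ) • (X + Xᵀ)
noncomputable def mdev {n : ℕ} (X : Matrix (Fin n) (Fin n) ℝ) : Matrix (Fin n) (Fin n) ℝ :=
  X - (X.trace / n) • (1 : Matrix (Fin n) (Fin n) ℝ)
noncomputable def mils {n : ℕ} (X : Matrix (Fin n) (Fin n) ℝ) : Matrix (Fin n) (Fin n) ℝ :=
  msym X - (X.trace / n) • (1 : Matrix (Fin n) (Fin n) ℝ)

/-- Matrix exponential, defined by its power series. -/
noncomputable def mexp {n : ℕ} (A : Matrix (Fin n) (Fin n) ℝ) : Matrix (Fin n) (Fin n) ℝ :=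
  ∑' k : ℕ, ((k.factorial : ℝ)⁻¹) • A ^ k

/-- The eigenvalues of a symmetric real matrix, listed in ascending order
(and junk value `0` if the matrix is not symmetric). -/
noncomputable def sortedEig {n : ℕ} (A : Matrix (Fin n) (Fin n) ℝ) : Fin n → ℝ :=
  if hA : A.IsHermitian then fun i => hA.eigenvalues (Tuple.sort hA.eigenvalues i) else 0

/-- The singular values of a real square matrix in ascending order. -/
noncomputable def singVals {n : ℕ} (X : Matrix (Fin n) (Fin n) ℝ) : Fin n → ℝ :=
  fun i => Real.sqrt (sortedEig (Xᵀ * X) i)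

/-- The Jacobian matrix of a map `ℝ^n → ℝ^n`. -/
noncomputable def jac {n : ℕ} (u : EuclideanSpace ℝ (Fin n) → EuclideanSpace ℝ (Fin n))
    (x : EuclideanSpace ℝ (Fin n)) : Matrix (Fin n) (Fin n) ℝ :=
  fun i j => fderiv ℝ u x (EuclideanSpace.single j 1) i

set_option maxHeartbeats 1000000
open scoped RealInnerProductSpace ENNReal NNReal

namespace Rig

variable {n : ℕ}

lemma frobSq_nonneg (X : Matrix (Fin n) (Fin n) ℝ) : 0 ≤ frobSq X :=
  Finset.sum_nonneg fun _ _ => Finset.sum_nonneg fun _ _ => sq_nonneg _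

lemma frob_nonneg (X : Matrix (Fin n) (Fin n) ℝ) : 0 ≤ frob X := Real.sqrt_nonneg _

lemma frob_sq (X : Matrix (Fin n) (Fin n) ℝ) : frob X ^ 2 = frobSq X :=
  Real.sq_sqrt (frobSq_nonneg X)

noncomputable def matE (X : Matrix (Fin n) (Fin n) ℝ) : EuclideanSpace ℝ (Fin n × Fin n) :=
  WithLp.toLp 2 (fun p : Fin n × Fin n => X p.1 p.2)

lemma frob_eq_norm (X : Matrix (Fin n) (Fin n) ℝ) : frob X = ‖matE X‖ := by
  rw [EuclideanSpace.norm_eq]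
  unfold frob
  congr 1
  rw [frobSq, Fintype.sum_prod_type]
  refine Finset.sum_congr rfl fun i _ => Finset.sum_congr rfl fun j _ => ?_
  rw [Real.norm_eq_abs, sq_abs]
  rfl

lemma matE_add (X Y : Matrix (Fin n) (Fin n) ℝ) : matE (X + Y) = matE X + matE Y := by ext p; simp [matE]
lemma matE_smul (a : ℝ) (X : Matrix (Fin n) (Fin n) ℝ) : matE (a • X) = a • matE X := by ext p; simp [matE]
lemma matE_neg (X : Matrix (Fin n) (Fin n) ℝ) : matE (-X) = -matE X := by ext p; simp [matE]

lemma frob_add_le (X Y : Matrix (Fin n) (Fin n) ℝ) : frob (X + Y) ≤ frob X + frob Y := by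
  rw [frob_eq_norm, frob_eq_norm, frob_eq_norm, matE_add]; exact norm_add_le _ _

lemma frob_smul (a : ℝ) (X : Matrix (Fin n) (Fin n) ℝ) : frob (a • X) = |a| * frob X := by
  rw [frob_eq_norm, frob_eq_norm, matE_smul, norm_smul, Real.norm_eq_abs]

lemma frob_neg (X : Matrix (Fin n) (Fin n) ℝ) : frob (-X) = frob X := by
  rw [frob_eq_norm, frob_eq_norm, matE_neg, norm_neg]

lemma frob_sub_le (X Y : Matrix (Fin n) (Fin n) ℝ) : frob X - frob Y ≤ frob (X - Y) := by
  have := frob_add_le (X - Y) Y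
  simpa using this

lemma frob_transpose (X : Matrix (Fin n) (Fin n) ℝ) : frob Xᵀ = frob X := by
  unfold frob frobSq
  rw [Finset.sum_comm]
  rfl

lemma frob_zero : frob (0 : Matrix (Fin n) (Fin n) ℝ) = 0 := by
  simp [frob, frobSq]

lemma frobSq_mul_le (X Y : Matrix (Fin n) (Fin n) ℝ) :
    frobSq (X * Y) ≤ frobSq X * frobSq Y := by
  unfold frobSq
  calc ∑ i, ∑ j, ((X * Y) i j)^2
      ≤ ∑ i, ∑ j, (∑ k, (X i k)^2) * (∑ k, (Y k j)^2) := by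
        refine Finset.sum_le_sum fun i _ => Finset.sum_le_sum fun j _ => ?_
        simpa [Matrix.mul_apply] using
          Finset.sum_mul_sq_le_sq_mul_sq Finset.univ (fun k => X i k) (fun k => Y k j)
    _ = (∑ i, ∑ k, (X i k)^2) * (∑ j, ∑ k, (Y k j)^2) :=
        (Finset.sum_mul_sum Finset.univ Finset.univ _ _).symm
    _ = (∑ i, ∑ j, (X i j)^2) * (∑ i, ∑ j, (Y i j)^2) := by
        congr 1
        exact Finset.sum_comm

lemma frob_mul_le (X Y : Matrix (Fin n) (Fin n) ℝ) : frob (X * Y) ≤ frob X * frob Y := by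
  rw [frob, frob, frob, ← Real.sqrt_mul (frobSq_nonneg X)]
  exact Real.sqrt_le_sqrt (frobSq_mul_le X Y)

lemma abs_entry_le_frob (X : Matrix (Fin n) (Fin n) ℝ) (i j : Fin n) : |X i j| ≤ frob X := by
  rw [frob, ← Real.sqrt_sq_eq_abs]
  apply Real.sqrt_le_sqrt
  calc (X i j)^2 ≤ ∑ j', (X i j')^2 :=
        Finset.single_le_sum (f := fun j' => (X i j')^2) (fun _ _ => sq_nonneg _) (Finset.mem_univ j)
    _ ≤ frobSq X :=
        Finset.single_le_sum (f := fun i' => ∑ j', (X i' j')^2)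
          (fun _ _ => Finset.sum_nonneg fun _ _ => sq_nonneg _) (Finset.mem_univ i)

lemma frobSq_one : frobSq (1 : Matrix (Fin n) (Fin n) ℝ) = n := by
  unfold frobSq
  have h : ∀ i : Fin n, ∑ j, ((1 : Matrix (Fin n) (Fin n) ℝ) i j)^2 = 1 := by
    intro i
    rw [Finset.sum_eq_single i]
    · rw [Matrix.one_apply_eq]; norm_num
    · intro b _ hb
      rw [Matrix.one_apply_ne (Ne.symm hb)]
      ring
    · intro h; exact absurd (Finset.mem_univ i) h
  simp [h]

lemma frob_one : frob (1 : Matrix (Fin n) (Fin n) ℝ) = Real.sqrt n := by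
  rw [frob, frobSq_one]

lemma frobSq_orth {R : Matrix (Fin n) (Fin n) ℝ} (hR : Rᵀ * R = 1) : frobSq R = n := by
  unfold frobSq
  rw [Finset.sum_comm]
  have h : ∀ j, ∑ i, (R i j)^2 = 1 := by
    intro j
    have := congrArg (fun M => M j j) hR
    simpa [Matrix.mul_apply, Matrix.transpose_apply, sq] using this
  simp [h]

lemma frob_orth {R : Matrix (Fin n) (Fin n) ℝ} (hR : Rᵀ * R = 1) : frob R = Real.sqrt n := by
  rw [frob, frobSq_orth hR]

lemma frob_orth_sub_one_le {R : Matrix (Fin n) (Fin n) ℝ} (hR : Rᵀ * R = 1) :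
    frob (R - 1) ≤ 2 * Real.sqrt n := by
  have h := frob_add_le R (-1)
  rw [frob_neg, frob_one, frob_orth hR] at h
  simpa [sub_eq_add_neg, two_mul] using h

abbrev E (n : ℕ) := EuclideanSpace ℝ (Fin n)

lemma teuc_apply (A : Matrix (Fin n) (Fin n) ℝ) (x : E n) (i : Fin n) :
    Matrix.toEuclideanLin A x i = ∑ j, A i j * x j := rfl

lemma teuc_one (x : E n) : Matrix.toEuclideanLin (1 : Matrix (Fin n) (Fin n) ℝ) x = x := by
  ext i
  rw [teuc_apply]
  simp [Matrix.one_apply, Finset.sum_ite_eq]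

lemma teuc_mul_apply (A B : Matrix (Fin n) (Fin n) ℝ) (x : E n) :
    Matrix.toEuclideanLin (A * B) x = Matrix.toEuclideanLin A (Matrix.toEuclideanLin B x) := by
  ext i
  rw [teuc_apply, teuc_apply]
  simp only [teuc_apply, Matrix.mul_apply, Finset.sum_mul, Finset.mul_sum]
  rw [Finset.sum_comm]
  refine Finset.sum_congr rfl fun k _ => Finset.sum_congr rfl fun j _ => by ring

lemma norm_sq_eq (x : E n) : ‖x‖^2 = ∑ i, (x i)^2 := by
  rw [EuclideanSpace.norm_eq, Real.sq_sqrt (Finset.sum_nonneg fun _ _ => sq_nonneg _)]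
  refine Finset.sum_congr rfl fun i _ => by rw [Real.norm_eq_abs, sq_abs]

lemma norm_teuc_le (A : Matrix (Fin n) (Fin n) ℝ) (x : E n) :
    ‖Matrix.toEuclideanLin A x‖ ≤ frob A * ‖x‖ := by
  have h1 : ‖Matrix.toEuclideanLin A x‖^2 ≤ frobSq A * ‖x‖^2 := by
    rw [norm_sq_eq, norm_sq_eq]
    calc ∑ i, (Matrix.toEuclideanLin A x i)^2
        ≤ ∑ i, (∑ j, (A i j)^2) * (∑ j, (x j)^2) := by
          refine Finset.sum_le_sum fun i _ => ?_
          rw [teuc_apply]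
          exact Finset.sum_mul_sq_le_sq_mul_sq Finset.univ (fun j => A i j) (fun j => x j)
      _ = frobSq A * ∑ j, (x j)^2 := by rw [frobSq, Finset.sum_mul]
  rw [frob, ← Real.sqrt_sq (norm_nonneg x), ← Real.sqrt_mul (frobSq_nonneg A),
    ← Real.sqrt_sq (norm_nonneg (Matrix.toEuclideanLin A x))]
  exact Real.sqrt_le_sqrt h1

lemma inner_eq (x y : E n) : ⟪x, y⟫ = ∑ i, x i * y i := by
  simp [PiLp.inner_apply, RCLike.inner_apply, mul_comm]

lemma inner_teuc (A : Matrix (Fin n) (Fin n) ℝ) (x y : E n) :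
    ⟪Matrix.toEuclideanLin A x, y⟫ = ⟪x, Matrix.toEuclideanLin Aᵀ y⟫ := by
  rw [inner_eq, inner_eq]
  simp only [teuc_apply, Finset.sum_mul, Finset.mul_sum, Matrix.transpose_apply]
  rw [Finset.sum_comm]
  exact Finset.sum_congr rfl fun j _ => Finset.sum_congr rfl fun i _ => by ring

lemma inner_orth {R : Matrix (Fin n) (Fin n) ℝ} (hR : Rᵀ * R = 1) (x y : E n) :
    ⟪Matrix.toEuclideanLin R x, Matrix.toEuclideanLin R y⟫ = ⟪x, y⟫ := by
  rw [inner_teuc, ← teuc_mul_apply, hR, teuc_one]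

/-- A nonzero skew-symmetric matrix has kernel of dimension at most `n - 2`. -/
lemma skew_ker_le (hn : 2 ≤ n) {A : Matrix (Fin n) (Fin n) ℝ} (hA : Aᵀ = -A) (h0 : A ≠ 0) :
    Module.finrank ℝ (LinearMap.ker (Matrix.toEuclideanLin A)) ≤ n - 2 := by
  set f := Matrix.toEuclideanLin A with hf
  set K := LinearMap.ker f with hK
  by_contra hcon
  push_neg at hcon
  have hE : Module.finrank ℝ (E n) = n := finrank_euclideanSpace_fin
  have hKle : Module.finrank ℝ K ≤ n := by
    have h := Submodule.finrank_le K
    rw [hE] at h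
    exact h
  have hskew : ∀ x y : E n, ⟪f x, y⟫ = -⟪x, f y⟫ := by
    intro x y
    rw [hf, inner_teuc, hA]
    simp only [map_neg, LinearMap.neg_apply, inner_neg_right]
  -- finrank K = n - 1 or n
  have hKge : n - 1 ≤ Module.finrank ℝ K := by omega
  have huK : ∀ u : E n, u ∈ K → u ∈ Kᗮ → u = 0 := by
    intro u hu huo
    have : ⟪u, u⟫ = 0 := (Submodule.mem_orthogonal K u).mp huo u hu
    exact inner_self_eq_zero.mp this
  rcases eq_or_lt_of_le hKle with h | h
  · -- kernel is everything: A = 0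
    have hKtop : K = ⊤ := Submodule.eq_top_of_finrank_eq (by rw [h, hE])
    apply h0
    have : Matrix.toEuclideanLin A = 0 := by
      apply LinearMap.ext
      intro x
      have hx : x ∈ K := hKtop ▸ Submodule.mem_top
      simpa [hK] using hx
    exact (LinearEquiv.map_eq_zero_iff Matrix.toEuclideanLin).mp this
  · -- kernel is a hyperplane
    have hKd : Module.finrank ℝ K = n - 1 := by omega
    have horth : Module.finrank ℝ Kᗮ = 1 := by
      have hsum := Submodule.finrank_add_finrank_orthogonal K
      rw [hE, hKd] at hsum
      omega
    have : Nontrivial Kᗮ := by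
      rw [← Module.finrank_pos_iff (R := ℝ)]
      omega
    obtain ⟨u', hu'⟩ := exists_ne (0 : Kᗮ)
    set u : E n := (u' : E n) with hu
    have huo : u ∈ Kᗮ := u'.2
    have hu0 : u ≠ 0 := fun hz => hu' (Subtype.ext hz)
    have hspan : (ℝ ∙ u) = Kᗮ := by
      apply Submodule.eq_of_le_of_finrank_eq
      · rw [Submodule.span_singleton_le_iff_mem]; exact huo
      · rw [finrank_span_singleton hu0, horth]
    have hfu : f u ∈ Kᗮ := by
      rw [Submodule.mem_orthogonal]
      intro k hk
      have hk0 : f k = 0 := hk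
      rw [real_inner_comm, hskew u k, hk0, inner_zero_right, neg_zero]
    rw [← hspan, Submodule.mem_span_singleton] at hfu
    obtain ⟨t, ht⟩ := hfu
    have hinz : ⟪u, f u⟫ = 0 := by
      have h1 := hskew u u
      have h2 := real_inner_comm u (f u)
      linarith
    rw [← ht, real_inner_smul_right] at hinz
    have ht0 : t = 0 := by
      rcases mul_eq_zero.mp hinz with h' | h'
      · exact h'
      · exact absurd (inner_self_eq_zero.mp h') hu0
    have : f u = 0 := by rw [← ht, ht0, zero_smul]
    exact hu0 (huK u this huo)

lemma teuc_sub_one (Rm : Matrix (Fin n) (Fin n) ℝ) (x : E n) :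
    Matrix.toEuclideanLin (Rm - 1) x = Matrix.toEuclideanLin Rm x - x := by
  rw [map_sub]
  simp [teuc_one]

lemma single_coord (j : Fin n) (i : Fin n) :
    (EuclideanSpace.single j (1:ℝ)) i = if i = j then 1 else 0 := by
  rw [EuclideanSpace.single_apply]

lemma teuc_entry (Rm : Matrix (Fin n) (Fin n) ℝ) (i j : Fin n) :
    Matrix.toEuclideanLin Rm (EuclideanSpace.single j (1:ℝ)) i = Rm i j := by
  rw [teuc_apply]
  rw [Finset.sum_eq_single j]
  · rw [single_coord]; simp
  · intro b _ hb; rw [single_coord]; simp [hb]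
  · intro h; exact absurd (Finset.mem_univ j) h

/-- A special orthogonal matrix `R ≠ 1` has `ker (R - 1)` of dimension at most `n - 2`. -/
lemma rot_ker_le (hn : 2 ≤ n) {R : Matrix (Fin n) (Fin n) ℝ} (hR : Rᵀ * R = 1)
    (hdet : R.det = 1) (hne : R ≠ 1) :
    Module.finrank ℝ (LinearMap.ker (Matrix.toEuclideanLin (R - 1))) ≤ n - 2 := by
  set f := Matrix.toEuclideanLin R with hf
  set K := LinearMap.ker (Matrix.toEuclideanLin (R - 1)) with hK
  have hmemK : ∀ x : E n, x ∈ K ↔ f x = x := by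
    intro x
    rw [hK, LinearMap.mem_ker, teuc_sub_one, sub_eq_zero]
  by_contra hcon
  push_neg at hcon
  have hE : Module.finrank ℝ (E n) = n := finrank_euclideanSpace_fin
  have hKle : Module.finrank ℝ K ≤ n := by
    have h := Submodule.finrank_le K
    rw [hE] at h
    exact h
  have hip : ∀ x y : E n, ⟪f x, f y⟫ = ⟪x, y⟫ := fun x y => inner_orth hR x y
  have huK : ∀ u : E n, u ∈ K → u ∈ Kᗮ → u = 0 := by
    intro u hu huo
    exact inner_self_eq_zero.mp ((Submodule.mem_orthogonal K u).mp huo u hu)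
  rcases eq_or_lt_of_le hKle with h | h
  · -- R = 1
    have hKtop : K = ⊤ := Submodule.eq_top_of_finrank_eq (by rw [h, hE])
    apply hne
    have hz : Matrix.toEuclideanLin (R - 1) = 0 := by
      apply LinearMap.ext
      intro x
      have hx : x ∈ K := hKtop ▸ Submodule.mem_top
      simpa [hK] using hx
    have := (LinearEquiv.map_eq_zero_iff Matrix.toEuclideanLin).mp hz
    rwa [sub_eq_zero] at this
  · have hKd : Module.finrank ℝ K = n - 1 := by omega
    have horth : Module.finrank ℝ Kᗮ = 1 := by
      have hsum := Submodule.finrank_add_finrank_orthogonal K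
      rw [hE, hKd] at hsum
      omega
    have : Nontrivial Kᗮ := by
      rw [← Module.finrank_pos_iff (R := ℝ)]
      omega
    obtain ⟨u', hu'⟩ := exists_ne (0 : Kᗮ)
    set u : E n := (u' : E n) with hu
    have huo : u ∈ Kᗮ := u'.2
    have hu0 : u ≠ 0 := fun hz => hu' (Subtype.ext hz)
    have huu : ⟪u, u⟫ ≠ 0 := fun hz => hu0 (inner_self_eq_zero.mp hz)
    have hspan : (ℝ ∙ u) = Kᗮ := by
      apply Submodule.eq_of_le_of_finrank_eq
      · rw [Submodule.span_singleton_le_iff_mem]; exact huo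
      · rw [finrank_span_singleton hu0, horth]
    have hfu : f u ∈ Kᗮ := by
      rw [Submodule.mem_orthogonal]
      intro k hk
      have hk' : f k = k := (hmemK k).mp hk
      calc ⟪k, f u⟫ = ⟪f k, f u⟫ := by rw [hk']
        _ = ⟪k, u⟫ := hip k u
        _ = 0 := (Submodule.mem_orthogonal K u).mp huo k hk
    rw [← hspan, Submodule.mem_span_singleton] at hfu
    obtain ⟨t, ht⟩ := hfu
    have ht2 : t ^ 2 * ⟪u, u⟫ = ⟪u, u⟫ := by
      have h1 := hip u u
      rw [← ht, real_inner_smul_left, real_inner_smul_right] at h1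
      calc t ^ 2 * ⟪u, u⟫ = t * (t * ⟪u, u⟫) := by ring
        _ = ⟪u, u⟫ := h1
    have ht1 : t = 1 ∨ t = -1 := by
      have h2 : (t - 1) * (t + 1) * ⟪u, u⟫ = 0 := by
        have he : (t - 1) * (t + 1) * ⟪u, u⟫ = t ^ 2 * ⟪u, u⟫ - ⟪u, u⟫ := by ring
        rw [he, ht2, sub_self]
      rcases mul_eq_zero.mp h2 with h' | h'
      · rcases mul_eq_zero.mp h' with h'' | h''
        · left; linarith
        · right; linarith
      · exact absurd h' huu
    rcases ht1 with ht1 | ht1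
    · -- t = 1 : u is fixed, contradiction
      have : f u = u := by rw [← ht, ht1, one_smul]
      exact hu0 (huK u ((hmemK u).mpr this) huo)
    · -- t = -1 : R is a reflection, det = -1
      exfalso
      have hfx : ∀ x : E n, f x = x - ((2 * ⟪x, u⟫ / ⟪u, u⟫) • u) := by
        intro x
        set a : ℝ := ⟪x, u⟫ / ⟪u, u⟫ with ha
        set k : E n := x - a • u with hk'
        have hkK : k ∈ K := by
          have hk_orth : k ∈ (ℝ ∙ u)ᗮ := by
            rw [Submodule.mem_orthogonal]
            intro w hw
            obtain ⟨b, hb⟩ := Submodule.mem_span_singleton.mp hw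
            rw [← hb, real_inner_smul_left]
            have : ⟪u, k⟫ = 0 := by
              rw [hk', inner_sub_right, real_inner_smul_right, ha, real_inner_comm u x,
                div_mul_cancel₀ _ huu, sub_self]
            rw [this, mul_zero]
          rw [hspan, Submodule.orthogonal_orthogonal] at hk_orth
          exact hk_orth
        have hfk : f k = k := (hmemK k).mp hkK
        have hx : x = k + a • u := by rw [hk']; abel
        calc f x = f k + a • f u := by rw [hx, map_add, LinearMap.map_smul]
          _ = k + a • ((-1 : ℝ) • u) := by rw [hfk, ← ht, ht1]
          _ = x - a • u - a • u := by rw [hx]; module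
          _ = x - ((2 * ⟪x, u⟫ / ⟪u, u⟫) • u) := by rw [ha]; module
      -- matrix identity R = 1 + col v * row w
      have hRmat : R = 1 + Matrix.replicateCol Unit (fun i => (-2 / ⟪u, u⟫) * u i) * Matrix.replicateRow Unit (fun j => u j) := by
        ext i j
        have h1 := congrArg (fun z : E n => z i) (hfx (EuclideanSpace.single j (1:ℝ)))
        simp only at h1
        rw [teuc_entry] at h1
        have hinner : ⟪EuclideanSpace.single j (1:ℝ), u⟫ = u j := by
          rw [inner_eq, Finset.sum_eq_single j]
          · rw [single_coord]; simp
          · intro b _ hb; rw [single_coord]; simp [hb]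
          · intro hh; exact absurd (Finset.mem_univ j) hh
        rw [hinner] at h1
        rw [Matrix.add_apply, Matrix.mul_apply, Fintype.sum_unique, Matrix.replicateCol_apply,
          Matrix.replicateRow_apply, h1]
        have h3 : (EuclideanSpace.single j (1:ℝ) - (2 * u j / ⟪u, u⟫) • u) i
            = (EuclideanSpace.single j (1:ℝ)) i - (2 * u j / ⟪u, u⟫) * u i := rfl
        rw [h3, single_coord, Matrix.one_apply]
        ring
      have hdet' : R.det = 1 + (fun j => u j) ⬝ᵥ (fun i => (-2 / ⟪u, u⟫) * u i) := by
        rw [hRmat, Matrix.det_one_add_replicateCol_mul_replicateRow]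
      have hdot : (fun j => u j) ⬝ᵥ (fun i => (-2 / ⟪u, u⟫) * u i) = -2 := by
        have h4 : (fun j => u j) ⬝ᵥ (fun i => (-2 / ⟪u, u⟫) * u i)
            = (-2 / ⟪u, u⟫) * ∑ i, u i * u i := by
          simp only [dotProduct, Finset.mul_sum]
          exact Finset.sum_congr rfl fun i _ => by ring
        rw [h4, ← inner_eq, div_mul_cancel₀ _ huu]
      rw [hdet, hdot] at hdet'
      norm_num at hdet'
  

/-- An affine subspace of dimension `≤ n-2` is `H^{n-1}`-null. -/
lemma affine_meas_zero (hn : 2 ≤ n) (A : Matrix (Fin n) (Fin n) ℝ) (c : E n)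
    (hker : Module.finrank ℝ (LinearMap.ker (Matrix.toEuclideanLin A)) ≤ n - 2) :
    μH[(n:ℝ)-1] {x : E n | Matrix.toEuclideanLin A x = c} = 0 := by
  set T := {x : E n | Matrix.toEuclideanLin A x = c} with hT
  rcases T.eq_empty_or_nonempty with hemp | ⟨x₀, hx₀⟩
  · rw [hemp]; exact measure_empty
  · set K := LinearMap.ker (Matrix.toEuclideanLin A) with hK
    have hsub : T ⊆ (fun y => x₀ + y) '' (K : Set (E n)) := by
      intro x hx
      refine ⟨x - x₀, ?_, by module⟩
      have hz : Matrix.toEuclideanLin A (x - x₀) = 0 := by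
        have hx' : Matrix.toEuclideanLin A x = c := hx
        have hx₀' : Matrix.toEuclideanLin A x₀ = c := hx₀
        rw [map_sub, hx', hx₀', sub_self]
      exact hz
    have hdim : dimH T ≤ ((n - 2 : ℕ) : ℝ≥0∞) := by
      calc dimH T ≤ dimH ((fun y => x₀ + y) '' (K : Set (E n))) := dimH_mono hsub
        _ = dimH (K : Set (E n)) := by
            have hiso : Isometry (fun y : E n => x₀ + y) :=
              Isometry.of_dist_eq fun a b => dist_add_left x₀ a b
            exact hiso.dimH_image _
        _ = dimH (Set.univ : Set K) := by
            have hiso : Isometry ((↑) : K → E n) := isometry_subtype_coe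
            rw [← hiso.dimH_image]
            congr 1
            rw [Set.image_univ, Subtype.range_coe]
        _ = (Module.finrank ℝ K : ℝ≥0∞) := Real.dimH_univ_eq_finrank K
        _ ≤ ((n - 2 : ℕ) : ℝ≥0∞) := Nat.cast_le.mpr hker
    have hlt : dimH T < (((n - 1 : ℕ) : ℝ≥0) : ℝ≥0∞) := by
      refine lt_of_le_of_lt hdim ?_
      have h5 : ((n - 2 : ℕ) : ℝ≥0∞) < ((n - 1 : ℕ) : ℝ≥0∞) := Nat.cast_lt.mpr (by omega)
      simpa using h5
    have hexp : ((n:ℝ) - 1) = (((n - 1 : ℕ) : ℝ≥0) : ℝ) := by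
      rw [NNReal.coe_natCast]
      have h1 : (1:ℕ) ≤ n := by omega
      push_cast [Nat.cast_sub h1]
      ring
    rw [hexp]
    exact hausdorffMeasure_of_dimH_lt hlt

noncomputable def Nf (S : Set (E n)) (A : Matrix (Fin n) (Fin n) ℝ) (c : E n) : ℝ :=
  ∫ x in S, ‖Matrix.toEuclideanLin A x - c‖ ∂(μH[(n:ℝ)-1])

lemma cont_integrand (A : Matrix (Fin n) (Fin n) ℝ) (c : E n) :
    Continuous (fun x : E n => ‖Matrix.toEuclideanLin A x - c‖) := by
  have h1 : Continuous (Matrix.toEuclideanLin A : E n →ₗ[ℝ] E n) :=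
    LinearMap.continuous_of_finiteDimensional _
  exact (h1.sub continuous_const).norm

variable {S : Set (E n)} {M : ℝ}

lemma integrable_g (hSm : MeasurableSet S) (hfin : μH[(n:ℝ)-1] S < ⊤)
    (hM : ∀ x ∈ S, ‖x‖ ≤ M)
    (A : Matrix (Fin n) (Fin n) ℝ) (c : E n) :
    IntegrableOn (fun x : E n => ‖Matrix.toEuclideanLin A x - c‖) S (μH[(n:ℝ)-1]) := by
  refine Integrable.mono' (g := fun _ => frob A * M + ‖c‖)
    (integrableOn_const (ne_of_lt hfin))
    ((cont_integrand A c).aestronglyMeasurable) ?_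
  refine (ae_restrict_iff' hSm).mpr (ae_of_all _ fun x hx => ?_)
  rw [Real.norm_of_nonneg (norm_nonneg _)]
  calc ‖Matrix.toEuclideanLin A x - c‖ ≤ ‖Matrix.toEuclideanLin A x‖ + ‖c‖ := norm_sub_le _ _
    _ ≤ frob A * ‖x‖ + ‖c‖ := by linarith [norm_teuc_le A x]
    _ ≤ frob A * M + ‖c‖ := by
        have := mul_le_mul_of_nonneg_left (hM x hx) (frob_nonneg A)
        linarith

lemma Nf_nonneg (S : Set (E n)) (A : Matrix (Fin n) (Fin n) ℝ) (c : E n) : 0 ≤ Nf S A c :=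
  integral_nonneg fun _ => norm_nonneg _

lemma Nf_add_le (hSm : MeasurableSet S) (hfin : μH[(n:ℝ)-1] S < ⊤) (hM : ∀ x ∈ S, ‖x‖ ≤ M)
    (A B : Matrix (Fin n) (Fin n) ℝ) (c d : E n) :
    Nf S (A + B) (c + d) ≤ Nf S A c + Nf S B d := by
  have hptw : ∀ x : E n, ‖Matrix.toEuclideanLin (A + B) x - (c + d)‖ ≤
      ‖Matrix.toEuclideanLin A x - c‖ + ‖Matrix.toEuclideanLin B x - d‖ := by
    intro x
    have h1 : Matrix.toEuclideanLin (A + B) x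
        = Matrix.toEuclideanLin A x + Matrix.toEuclideanLin B x := by
      rw [map_add]; rfl
    rw [h1, add_sub_add_comm]
    exact norm_add_le _ _
  calc Nf S (A + B) (c + d)
      ≤ ∫ x in S, (‖Matrix.toEuclideanLin A x - c‖ + ‖Matrix.toEuclideanLin B x - d‖)
          ∂(μH[(n:ℝ)-1]) := by
        refine integral_mono (integrable_g hSm hfin hM _ _)
          ((integrable_g hSm hfin hM A c).add (integrable_g hSm hfin hM B d)) hptw
    _ = Nf S A c + Nf S B d :=
        integral_add (integrable_g hSm hfin hM A c) (integrable_g hSm hfin hM B d)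

lemma Nf_smul (S : Set (E n)) (t : ℝ) (A : Matrix (Fin n) (Fin n) ℝ) (c : E n) :
    Nf S (t • A) (t • c) = |t| * Nf S A c := by
  unfold Nf
  rw [← integral_const_mul]
  refine integral_congr_ae (ae_of_all _ fun x => ?_)
  show ‖Matrix.toEuclideanLin (t • A) x - t • c‖ = |t| * ‖Matrix.toEuclideanLin A x - c‖
  have h1 : Matrix.toEuclideanLin (t • A) x = t • Matrix.toEuclideanLin A x := by
    rw [_root_.map_smul]; rfl
  rw [h1, ← smul_sub, norm_smul, Real.norm_eq_abs]

lemma Nf_le (hSm : MeasurableSet S) (hfin : μH[(n:ℝ)-1] S < ⊤) (hM : ∀ x ∈ S, ‖x‖ ≤ M)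
    (A : Matrix (Fin n) (Fin n) ℝ) (c : E n) :
    Nf S A c ≤ (μH[(n:ℝ)-1] S).toReal * (frob A * M + ‖c‖) := by
  calc Nf S A c ≤ ∫ _ in S, (frob A * M + ‖c‖) ∂(μH[(n:ℝ)-1]) := by
        refine setIntegral_mono_on (integrable_g hSm hfin hM A c)
          (integrableOn_const (ne_of_lt hfin)) hSm fun x hx => ?_
        calc ‖Matrix.toEuclideanLin A x - c‖
            ≤ ‖Matrix.toEuclideanLin A x‖ + ‖c‖ := norm_sub_le _ _
          _ ≤ frob A * ‖x‖ + ‖c‖ := by linarith [norm_teuc_le A x]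
          _ ≤ frob A * M + ‖c‖ := by
              have := mul_le_mul_of_nonneg_left (hM x hx) (frob_nonneg A)
              linarith
    _ = (μH[(n:ℝ)-1] S).toReal * (frob A * M + ‖c‖) := by
        rw [setIntegral_const, smul_eq_mul]; rfl

lemma Nf_ge (hSm : MeasurableSet S) (hfin : μH[(n:ℝ)-1] S < ⊤) (hM : ∀ x ∈ S, ‖x‖ ≤ M)
    (A : Matrix (Fin n) (Fin n) ℝ) (c : E n) (lb : ℝ)
    (hlb : ∀ x ∈ S, lb ≤ ‖Matrix.toEuclideanLin A x - c‖) :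
    (μH[(n:ℝ)-1] S).toReal * lb ≤ Nf S A c := by
  calc (μH[(n:ℝ)-1] S).toReal * lb = ∫ _ in S, lb ∂(μH[(n:ℝ)-1]) := by
        rw [setIntegral_const, smul_eq_mul]; rfl
    _ ≤ Nf S A c :=
        setIntegral_mono_on (integrableOn_const (ne_of_lt hfin))
          (integrable_g hSm hfin hM A c) hSm hlb

lemma Nf_pos (hSm : MeasurableSet S) (h0 : 0 < μH[(n:ℝ)-1] S) (hfin : μH[(n:ℝ)-1] S < ⊤)
    (hM : ∀ x ∈ S, ‖x‖ ≤ M)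
    (A : Matrix (Fin n) (Fin n) ℝ) (c : E n)
    (hzero : μH[(n:ℝ)-1] {x : E n | Matrix.toEuclideanLin A x = c} = 0) :
    0 < Nf S A c := by
  rcases lt_or_eq_of_le (Nf_nonneg S A c) with h | h
  · exact h
  exfalso
  set T := {x : E n | Matrix.toEuclideanLin A x = c} with hT
  have hTc : IsClosed T := isClosed_eq (LinearMap.continuous_of_finiteDimensional _) continuous_const
  have hae : (fun x : E n => ‖Matrix.toEuclideanLin A x - c‖) =ᵐ[(μH[(n:ℝ)-1]).restrict S] 0 := by
    rw [← integral_eq_zero_iff_of_nonneg (fun x => norm_nonneg _)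
      (integrable_g hSm hfin hM A c)]
    exact h.symm
  have hres : (μH[(n:ℝ)-1]).restrict S Tᶜ = 0 := by
    have h2 : ∀ᵐ x ∂(μH[(n:ℝ)-1]).restrict S, ‖Matrix.toEuclideanLin A x - c‖ = 0 := hae
    rw [ae_iff] at h2
    refine le_antisymm (le_of_le_of_eq (measure_mono ?_) h2) (zero_le)
    intro x hx
    simp only [Set.mem_setOf_eq]
    intro hcon
    apply hx
    have : Matrix.toEuclideanLin A x - c = 0 := by
      have := norm_eq_zero.mp hcon
      exact this
    exact sub_eq_zero.mp this
  have hres' : μH[(n:ℝ)-1] (Tᶜ ∩ S) = 0 := by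
    rw [← Measure.restrict_apply hTc.isOpen_compl.measurableSet]
    exact hres
  have hcover : S ⊆ T ∪ (Tᶜ ∩ S) := by
    intro x hx
    by_cases hxT : x ∈ T
    · exact Or.inl hxT
    · exact Or.inr ⟨hxT, hx⟩
  have : μH[(n:ℝ)-1] S ≤ 0 := by
    calc μH[(n:ℝ)-1] S ≤ μH[(n:ℝ)-1] (T ∪ (Tᶜ ∩ S)) := measure_mono hcover
      _ ≤ μH[(n:ℝ)-1] T + μH[(n:ℝ)-1] (Tᶜ ∩ S) := measure_union_le _ _
      _ = 0 := by rw [hzero, hres', add_zero]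
  exact absurd (lt_of_lt_of_le h0 this) (by simp)


abbrev V (n : ℕ) := (Fin n → Fin n → ℝ) × E n

lemma frob_of_le (B : Fin n → Fin n → ℝ) : frob (Matrix.of B) ≤ n * ‖B‖ := by
  have h1 : frobSq (Matrix.of B) ≤ ((n:ℝ) * ‖B‖)^2 := by
    unfold frobSq
    have hb : ∀ i j : Fin n, (Matrix.of B i j)^2 ≤ ‖B‖^2 := by
      intro i j
      have h2 : ‖B i j‖ ≤ ‖B‖ := le_trans (norm_le_pi_norm (B i) j) (norm_le_pi_norm B i)
      rw [Real.norm_eq_abs] at h2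
      rw [← sq_abs]
      exact pow_le_pow_left₀ (abs_nonneg _) h2 2
    calc ∑ i, ∑ j, (Matrix.of B i j)^2 ≤ ∑ _i : Fin n, ∑ _j : Fin n, ‖B‖^2 :=
          Finset.sum_le_sum fun i _ => Finset.sum_le_sum fun j _ => hb i j
      _ = (n:ℝ) * ((n:ℝ) * ‖B‖^2) := by
          simp [Finset.sum_const, Finset.card_univ, mul_assoc]
      _ ≤ ((n:ℝ) * ‖B‖)^2 := by nlinarith [norm_nonneg B, Nat.cast_nonneg (α := ℝ) n]
  calc frob (Matrix.of B) = Real.sqrt (frobSq (Matrix.of B)) := rfl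
    _ ≤ Real.sqrt (((n:ℝ) * ‖B‖)^2) := Real.sqrt_le_sqrt h1
    _ = (n:ℝ) * ‖B‖ := Real.sqrt_sq (by positivity)

lemma pinorm_le_frob (B : Fin n → Fin n → ℝ) : ‖B‖ ≤ frob (Matrix.of B) := by
  refine (pi_norm_le_iff_of_nonneg (frob_nonneg _)).mpr fun i => ?_
  refine (pi_norm_le_iff_of_nonneg (frob_nonneg _)).mpr fun j => ?_
  rw [Real.norm_eq_abs]
  exact abs_entry_le_frob (Matrix.of B) i j

variable {S : Set (E n)} {M : ℝ}

noncomputable def NV (S : Set (E n)) : V n → ℝ := fun p => Nf S (Matrix.of p.1) p.2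

lemma of_decomp (a b : Fin n → Fin n → ℝ) :
    Matrix.of a = Matrix.of b + Matrix.of (a - b) := by
  ext i j
  simp [Matrix.add_apply]

lemma NV_lip_aux (hSm : MeasurableSet S) (hfin : μH[(n:ℝ)-1] S < ⊤) (hM : ∀ x ∈ S, ‖x‖ ≤ M)
    (hM0 : 0 ≤ M) (p q : V n) :
    NV S p ≤ NV S q + (μH[(n:ℝ)-1] S).toReal * ((n * M + 1) * dist p q) := by
  have hm0 : (0:ℝ) ≤ (μH[(n:ℝ)-1] S).toReal := ENNReal.toReal_nonneg
  have h1 : NV S p ≤ NV S q + Nf S (Matrix.of (p.1 - q.1)) (p.2 - q.2) := by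
    have hdc : Matrix.of p.1 = Matrix.of q.1 + Matrix.of (p.1 - q.1) := of_decomp p.1 q.1
    have hdc2 : p.2 = q.2 + (p.2 - q.2) := by abel
    calc NV S p = Nf S (Matrix.of q.1 + Matrix.of (p.1 - q.1)) (q.2 + (p.2 - q.2)) := by
          rw [NV, ← hdc, ← hdc2]
      _ ≤ NV S q + Nf S (Matrix.of (p.1 - q.1)) (p.2 - q.2) :=
          Nf_add_le hSm hfin hM _ _ _ _
  have h2 : Nf S (Matrix.of (p.1 - q.1)) (p.2 - q.2)
      ≤ (μH[(n:ℝ)-1] S).toReal * ((n * M + 1) * dist p q) := by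
    calc Nf S (Matrix.of (p.1 - q.1)) (p.2 - q.2)
        ≤ (μH[(n:ℝ)-1] S).toReal * (frob (Matrix.of (p.1 - q.1)) * M + ‖p.2 - q.2‖) :=
          Nf_le hSm hfin hM _ _
      _ ≤ (μH[(n:ℝ)-1] S).toReal * ((n * M + 1) * dist p q) := by
          refine mul_le_mul_of_nonneg_left ?_ hm0
          have hf : frob (Matrix.of (p.1 - q.1)) ≤ n * ‖p.1 - q.1‖ := frob_of_le _
          have hd1 : ‖p.1 - q.1‖ ≤ dist p q := by
            rw [dist_eq_norm]
            exact norm_fst_le (p - q)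
          have hd2 : ‖p.2 - q.2‖ ≤ dist p q := by
            rw [dist_eq_norm]
            exact norm_snd_le (p - q)
          have hn0 : (0:ℝ) ≤ n := Nat.cast_nonneg n
          have hfd : frob (Matrix.of (p.1 - q.1)) ≤ n * dist p q :=
            le_trans hf (mul_le_mul_of_nonneg_left hd1 hn0)
          have hfM : frob (Matrix.of (p.1 - q.1)) * M ≤ (n * dist p q) * M :=
            mul_le_mul_of_nonneg_right hfd hM0
          have hrng : ((n:ℝ) * dist p q) * M = n * M * dist p q := by ring
          have hrng2 : ((n:ℝ) * M + 1) * dist p q = n * M * dist p q + dist p q := by ring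
          linarith
  linarith

lemma NV_cont (hSm : MeasurableSet S) (hfin : μH[(n:ℝ)-1] S < ⊤) (hM : ∀ x ∈ S, ‖x‖ ≤ M)
    (hM0 : 0 ≤ M) : Continuous (NV S) := by
  set L : ℝ := (μH[(n:ℝ)-1] S).toReal * (n * M + 1) with hL
  have hL0 : 0 ≤ L := by
    apply mul_nonneg ENNReal.toReal_nonneg
    positivity
  refine (LipschitzWith.of_dist_le_mul (K := L.toNNReal) fun p q => ?_).continuous
  rw [Real.dist_eq, Real.coe_toNNReal L hL0, abs_sub_le_iff]
  have k1 := NV_lip_aux hSm hfin hM hM0 p q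
  have k2 := NV_lip_aux hSm hfin hM hM0 q p
  rw [dist_comm q p] at k2
  have hrng : (μH[(n:ℝ)-1] S).toReal * ((n * M + 1) * dist p q) = L * dist p q := by
    rw [hL]; ring
  rw [hrng] at k1 k2
  constructor <;> linarith

lemma NV_homog (S : Set (E n)) {t : ℝ} (ht : 0 ≤ t) (p : V n) :
    NV S (t • p) = t * NV S p := by
  have h1 : Matrix.of ((t • p).1) = t • Matrix.of p.1 := rfl
  have h2 : (t • p).2 = t • p.2 := rfl
  rw [NV, NV, h1, h2, Nf_smul, abs_of_nonneg ht]

lemma Nf_zero_zero (S : Set (E n)) : Nf S (0 : Matrix (Fin n) (Fin n) ℝ) (0 : E n) = 0 := by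
  unfold Nf
  have : ∀ x : E n, ‖Matrix.toEuclideanLin (0 : Matrix (Fin n) (Fin n) ℝ) x - (0 : E n)‖ = 0 := by
    intro x
    rw [map_zero]
    simp
  simp only [this]
  simp

lemma linear_est (hn : 2 ≤ n) (hSm : MeasurableSet S) (h0 : 0 < μH[(n:ℝ)-1] S)
    (hfin : μH[(n:ℝ)-1] S < ⊤) (hM : ∀ x ∈ S, ‖x‖ ≤ M) (hM0 : 0 ≤ M) :
    ∃ ε > (0:ℝ), ∀ (W : Matrix (Fin n) (Fin n) ℝ) (c : E n), Wᵀ = -W →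
      ε * (frob W + ‖c‖) ≤ Nf S W c := by
  classical
  set sph : Set (V n) := {p | (Matrix.of p.1)ᵀ = -Matrix.of p.1 ∧ ‖p‖ = 1} with hsph
  have hof : Continuous fun p : V n => Matrix.of p.1 := continuous_fst
  have hclosed : IsClosed sph :=
    (isClosed_eq hof.matrix_transpose hof.neg).inter (isClosed_eq continuous_norm continuous_const)
  have hbdd : Bornology.IsBounded sph := by
    rw [Metric.isBounded_iff_subset_closedBall 0]
    exact ⟨1, fun p hp => by
      rw [Metric.mem_closedBall, dist_zero_right, hp.2]⟩
  have hcomp : IsCompact sph := Metric.isCompact_of_isClosed_isBounded hclosed hbdd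
  have hne : sph.Nonempty := by
    refine ⟨(0, EuclideanSpace.single ⟨0, by omega⟩ (1:ℝ)), ?_, ?_⟩
    · show (Matrix.of (0 : Fin n → Fin n → ℝ))ᵀ = -Matrix.of (0 : Fin n → Fin n → ℝ)
      ext i j
      simp
    · rw [Prod.norm_def]
      simp [EuclideanSpace.norm_single]
  obtain ⟨pm, hpmS, hmin⟩ := hcomp.exists_isMinOn hne (NV_cont hSm hfin hM hM0).continuousOn
  have hskewm : (Matrix.of pm.1)ᵀ = -Matrix.of pm.1 := hpmS.1
  have hzero : μH[(n:ℝ)-1] {x : E n | Matrix.toEuclideanLin (Matrix.of pm.1) x = pm.2} = 0 := by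
    by_cases hA : Matrix.of pm.1 = 0
    · have hnc : pm.2 ≠ 0 := by
        intro hc
        have hnorm := hpmS.2
        rw [Prod.norm_def] at hnorm
        have h1 : ‖pm.1‖ = 0 := by
          rw [norm_eq_zero]
          have : Matrix.of pm.1 = Matrix.of 0 := by simpa using hA
          exact Matrix.of.injective this
        rw [h1, hc] at hnorm
        simp at hnorm
      have hTempty : {x : E n | Matrix.toEuclideanLin (Matrix.of pm.1) x = pm.2} = ∅ := by
        ext x
        simp only [Set.mem_setOf_eq, Set.mem_empty_iff_false, iff_false]
        rw [hA, map_zero]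
        exact fun h => hnc (by rw [← h]; rfl)
      rw [hTempty]
      exact measure_empty
    · exact affine_meas_zero hn _ _ (skew_ker_le hn hskewm hA)
  have hε0 : 0 < NV S pm := Nf_pos hSm h0 hfin hM _ _ hzero
  set ε0 : ℝ := NV S pm with hε0d
  have hkey : ∀ p : V n, (Matrix.of p.1)ᵀ = -Matrix.of p.1 → ε0 * ‖p‖ ≤ NV S p := by
    intro p hskew
    rcases eq_or_ne p 0 with hp0 | hp0
    · rw [hp0]
      have : NV S (0 : V n) = 0 := by
        show Nf S (Matrix.of (0 : Fin n → Fin n → ℝ)) (0 : E n) = 0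
        have hof0 : Matrix.of (0 : Fin n → Fin n → ℝ) = (0 : Matrix (Fin n) (Fin n) ℝ) := by
          ext i j; simp
        rw [hof0, Nf_zero_zero]
      rw [this]
      simp
    · have hpn : (0:ℝ) < ‖p‖ := norm_pos_iff.mpr hp0
      set q : V n := ‖p‖⁻¹ • p with hq
      have hq1 : ‖q‖ = 1 := by
        rw [hq, norm_smul, norm_inv, norm_norm, inv_mul_cancel₀ (ne_of_gt hpn)]
      have hqskew : (Matrix.of q.1)ᵀ = -Matrix.of q.1 := by
        have h1 : Matrix.of q.1 = ‖p‖⁻¹ • Matrix.of p.1 := rfl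
        rw [h1, Matrix.transpose_smul, hskew, smul_neg]
      have hqmem : q ∈ sph := ⟨hqskew, hq1⟩
      have h2 := hmin hqmem
      have h3 : NV S q = ‖p‖⁻¹ * NV S p := NV_homog S (by positivity) p
      have h4 : ε0 ≤ ‖p‖⁻¹ * NV S p := by
        rw [← h3]
        exact h2
      calc ε0 * ‖p‖ ≤ (‖p‖⁻¹ * NV S p) * ‖p‖ := mul_le_mul_of_nonneg_right h4 (le_of_lt hpn)
        _ = NV S p := by field_simp
  refine ⟨ε0 / (n + 1), by positivity, fun W c hskew => ?_⟩
  set p : V n := (Matrix.of.symm W, c) with hp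
  have hofp : Matrix.of p.1 = W := Matrix.of.apply_symm_apply W
  have hpskew : (Matrix.of p.1)ᵀ = -Matrix.of p.1 := by rw [hofp]; exact hskew
  have h5 := hkey p hpskew
  have h6 : frob W + ‖c‖ ≤ (n + 1) * ‖p‖ := by
    have ha : frob W ≤ n * ‖p‖ := by
      calc frob W = frob (Matrix.of p.1) := by rw [hofp]
        _ ≤ n * ‖p.1‖ := frob_of_le _
        _ ≤ n * ‖p‖ := by
            refine mul_le_mul_of_nonneg_left (norm_fst_le p) (Nat.cast_nonneg n)
    have hb : ‖c‖ ≤ ‖p‖ := norm_snd_le p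
    have : (0:ℝ) ≤ ‖p‖ := norm_nonneg p
    linarith
  have h7 : NV S p = Nf S W c := by rw [NV, hofp]
  rw [h7] at h5
  calc (ε0 / (n+1)) * (frob W + ‖c‖) ≤ (ε0 / (n+1)) * ((n+1) * ‖p‖) := by
        refine mul_le_mul_of_nonneg_left h6 (by positivity)
    _ = ε0 * ‖p‖ := by field_simp
    _ ≤ Nf S W c := h5


lemma frob_cont : Continuous (frob : Matrix (Fin n) (Fin n) ℝ → ℝ) := by
  have h1 : Continuous (frobSq : Matrix (Fin n) (Fin n) ℝ → ℝ) := by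
    unfold frobSq
    refine continuous_finset_sum _ fun i _ => continuous_finset_sum _ fun j _ => ?_
    exact ((continuous_apply j).comp (continuous_apply i)).pow 2
  exact Real.continuous_sqrt.comp h1

lemma compact_est (hn : 2 ≤ n) (hSm : MeasurableSet S) (h0 : 0 < μH[(n:ℝ)-1] S)
    (hfin : μH[(n:ℝ)-1] S < ⊤) (hM : ∀ x ∈ S, ‖x‖ ≤ M) (hM0 : 0 ≤ M)
    (δ Cc : ℝ) (hδ : 0 < δ) (hCc : 0 ≤ Cc) :
    ∃ m > (0:ℝ), ∀ (R : Matrix (Fin n) (Fin n) ℝ) (c : E n), Rᵀ * R = 1 → R.det = 1 →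
      δ ≤ frob (R - 1) → ‖c‖ ≤ Cc → m ≤ Nf S (R - 1) c := by
  classical
  set KK : Set (V n) := {p | (Matrix.of p.1)ᵀ * Matrix.of p.1 = 1 ∧ (Matrix.of p.1).det = 1 ∧
    δ ≤ frob (Matrix.of p.1 - 1) ∧ ‖p.2‖ ≤ Cc} with hKK
  have hof : Continuous fun p : V n => Matrix.of p.1 := continuous_fst
  -- the function to minimize
  set F : V n → ℝ := fun p => Nf S (Matrix.of p.1 - 1) p.2 with hF
  have hFcont : Continuous F := by
    have hφ : Continuous fun p : V n => ((Matrix.of.symm (Matrix.of p.1 - 1) : Fin n → Fin n → ℝ), p.2) := by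
      refine Continuous.prodMk ?_ continuous_snd
      exact (hof.sub continuous_const)
    have hFeq : F = (NV S) ∘ (fun p : V n => ((Matrix.of.symm (Matrix.of p.1 - 1) : Fin n → Fin n → ℝ), p.2)) := by
      funext p
      show Nf S (Matrix.of p.1 - 1) p.2 = Nf S (Matrix.of (Matrix.of.symm (Matrix.of p.1 - 1))) p.2
      rw [Matrix.of.apply_symm_apply]
    rw [hFeq]
    exact (NV_cont hSm hfin hM hM0).comp hφ
  have hclosed : IsClosed KK := by
    refine IsClosed.inter (isClosed_eq (hof.matrix_transpose.matrix_mul hof) continuous_const) ?_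
    refine IsClosed.inter (isClosed_eq hof.matrix_det continuous_const) ?_
    refine IsClosed.inter (isClosed_le continuous_const (frob_cont.comp (hof.sub continuous_const))) ?_
    exact isClosed_le (continuous_norm.comp continuous_snd) continuous_const
  have hbdd : Bornology.IsBounded KK := by
    rw [Metric.isBounded_iff_subset_closedBall 0]
    refine ⟨max (n:ℝ) Cc, fun p hp => ?_⟩
    rw [Metric.mem_closedBall, dist_zero_right, Prod.norm_def]
    have hsqn : Real.sqrt n ≤ (n:ℝ) := by
      have hcast : (1:ℝ) ≤ n := by exact_mod_cast le_trans (by norm_num) hn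
      calc Real.sqrt n ≤ Real.sqrt ((n:ℝ)^2) := Real.sqrt_le_sqrt (by nlinarith)
        _ = (n:ℝ) := Real.sqrt_sq (by positivity)
    have h1 : ‖p.1‖ ≤ (n:ℝ) := by
      calc ‖p.1‖ ≤ frob (Matrix.of p.1) := pinorm_le_frob p.1
        _ = Real.sqrt n := frob_orth hp.1
        _ ≤ (n:ℝ) := hsqn
    have h2 : ‖p.2‖ ≤ Cc := hp.2.2.2
    exact max_le_max h1 h2
  rcases KK.eq_empty_or_nonempty with hemp | hne
  · refine ⟨1, by norm_num, fun R c hR hdet hfrob hc => ?_⟩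
    exfalso
    have hmem : ((Matrix.of.symm R : Fin n → Fin n → ℝ), c) ∈ KK := by
      refine ⟨?_, ?_, ?_, hc⟩ <;> rw [show Matrix.of ((Matrix.of.symm R : Fin n → Fin n → ℝ), c).1 = R from Matrix.of.apply_symm_apply R]
      · exact hR
      · exact hdet
      · exact hfrob
    rw [hemp] at hmem
    exact hmem
  · have hcomp : IsCompact KK := Metric.isCompact_of_isClosed_isBounded hclosed hbdd
    obtain ⟨pm, hpmK, hmin⟩ := hcomp.exists_isMinOn hne hFcont.continuousOn
    have hR1 : Matrix.of pm.1 ≠ 1 := by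
      intro heq
      have : frob (Matrix.of pm.1 - 1) = 0 := by rw [heq, sub_self, frob_zero]
      linarith [hpmK.2.2.1]
    have hzero : μH[(n:ℝ)-1] {x : E n | Matrix.toEuclideanLin (Matrix.of pm.1 - 1) x = pm.2} = 0 :=
      affine_meas_zero hn _ _ (rot_ker_le hn hpmK.1 hpmK.2.1 hR1)
    have hm : 0 < F pm := Nf_pos hSm h0 hfin hM _ _ hzero
    refine ⟨F pm, hm, fun R c hR hdet hfrob hc => ?_⟩
    have hmem : ((Matrix.of.symm R : Fin n → Fin n → ℝ), c) ∈ KK := by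
      refine ⟨?_, ?_, ?_, hc⟩ <;> rw [show Matrix.of ((Matrix.of.symm R : Fin n → Fin n → ℝ), c).1 = R from Matrix.of.apply_symm_apply R]
      · exact hR
      · exact hdet
      · exact hfrob
    have := hmin hmem
    calc F pm ≤ F ((Matrix.of.symm R : Fin n → Fin n → ℝ), c) := this
      _ = Nf S (R - 1) c := by
          show Nf S (Matrix.of (Matrix.of.symm R) - 1) c = Nf S (R - 1) c
          rw [Matrix.of.apply_symm_apply]


/-- Small-regime (linearization) estimate. -/
lemma small_est (hSm : MeasurableSet S) (hfin : μH[(n:ℝ)-1] S < ⊤)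
    (hM : ∀ x ∈ S, ‖x‖ ≤ M) (hM0 : 0 ≤ M)
    {ε1 : ℝ} (hε1 : 0 < ε1)
    (hlin : ∀ (W : Matrix (Fin n) (Fin n) ℝ) (c : E n), Wᵀ = -W →
      ε1 * (frob W + ‖c‖) ≤ Nf S W c)
    (R : Matrix (Fin n) (Fin n) ℝ) (c : E n) (hR : Rᵀ * R = 1)
    (hsmall : frob (R - 1) ≤ ε1 / (ε1 + (μH[(n:ℝ)-1] S).toReal * M)) :
    (ε1 / 2) * (frob (R - 1) + ‖c‖) ≤ Nf S (R - 1) c := by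
  set m0 : ℝ := (μH[(n:ℝ)-1] S).toReal with hm0d
  have hm0 : 0 ≤ m0 := ENNReal.toReal_nonneg
  set Em : Matrix (Fin n) (Fin n) ℝ := R - 1 with hEm
  set W : Matrix (Fin n) (Fin n) ℝ := (1/2 : ℝ) • (Em - Emᵀ) with hW
  set Sm : Matrix (Fin n) (Fin n) ℝ := (1/2 : ℝ) • (Em + Emᵀ) with hSmd
  have hWskew : Wᵀ = -W := by
    rw [hW, Matrix.transpose_smul, Matrix.transpose_sub, Matrix.transpose_transpose, ← smul_neg]
    congr 1
    abel
  have hEW : Em = W + Sm := by rw [hW, hSmd]; module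
  have hEmT : Emᵀ = Rᵀ - 1 := by rw [hEm, Matrix.transpose_sub, Matrix.transpose_one]
  have hmul : Emᵀ * Em = 1 - Rᵀ - R + 1 := by
    have h1 : (Rᵀ - 1) * (R - 1) = Rᵀ * R - Rᵀ - R + 1 := by noncomm_ring
    rw [hEmT, hEm, h1, hR]
  have hid : Em + Emᵀ = -(Emᵀ * Em) := by
    rw [hmul, hEmT, hEm]
    abel
  have hSm2 : Sm = (-(1/2) : ℝ) • (Emᵀ * Em) := by
    rw [hSmd, hid, smul_neg, neg_smul]
  have hfrobSm : frob Sm ≤ (1/2) * frob Em ^ 2 := by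
    rw [hSm2, frob_smul]
    have h2 : frob (Emᵀ * Em) ≤ frob Em ^ 2 := by
      calc frob (Emᵀ * Em) ≤ frob Emᵀ * frob Em := frob_mul_le _ _
        _ = frob Em ^ 2 := by rw [frob_transpose]; ring
    have : |(-(1/2) : ℝ)| = 1/2 := by norm_num
    rw [this]
    linarith
  -- reverse triangle inequality
  have hWle : Nf S W c ≤ Nf S Em c + Nf S Sm 0 := by
    have hWeq : W = Em + (-1 : ℝ) • Sm := by rw [hEW]; module
    have hceq : c = c + (-1 : ℝ) • (0 : E n) := by simp
    calc Nf S W c = Nf S (Em + (-1 : ℝ) • Sm) (c + (-1 : ℝ) • (0 : E n)) := by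
          rw [← hWeq, ← hceq]
      _ ≤ Nf S Em c + Nf S ((-1 : ℝ) • Sm) ((-1 : ℝ) • (0 : E n)) := Nf_add_le hSm hfin hM _ _ _ _
      _ = Nf S Em c + Nf S Sm 0 := by rw [Nf_smul]; norm_num
  have hSmall : Nf S Sm 0 ≤ m0 * M * frob Sm := by
    have := Nf_le hSm hfin hM Sm (0 : E n)
    rw [norm_zero, add_zero] at this
    calc Nf S Sm 0 ≤ m0 * (frob Sm * M) := this
      _ = m0 * M * frob Sm := by ring
  have hlinW : ε1 * (frob W + ‖c‖) ≤ Nf S W c := hlin W c hWskew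
  have htri : frob Em ≤ frob W + frob Sm := by
    calc frob Em = frob (W + Sm) := by rw [← hEW]
      _ ≤ frob W + frob Sm := frob_add_le _ _
  -- combine
  set e := frob Em with he
  set s := frob Sm with hs
  set t := ‖c‖ with ht
  have he0 : 0 ≤ e := frob_nonneg _
  have hs0 : 0 ≤ s := frob_nonneg _
  have ht0 : 0 ≤ t := norm_nonneg _
  have hδe : (ε1 + m0 * M) * e ≤ ε1 := by
    have hden : 0 < ε1 + m0 * M := by positivity
    calc (ε1 + m0 * M) * e ≤ (ε1 + m0 * M) * (ε1 / (ε1 + m0 * M)) :=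
          mul_le_mul_of_nonneg_left hsmall (le_of_lt hden)
      _ = ε1 := by field_simp
  have hs_le : s ≤ (1/2) * e^2 := hfrobSm
  have hchain : ε1 * (e + t) - (ε1 + m0 * M) * s ≤ Nf S Em c := by
    have h3 : ε1 * (frob W + t) ≤ Nf S W c := hlinW
    have h4 : frob W ≥ e - s := by linarith
    have h5 : ε1 * ((e - s) + t) ≤ ε1 * (frob W + t) :=
      mul_le_mul_of_nonneg_left (by linarith) (le_of_lt hε1)
    have h6 : Nf S W c ≤ Nf S Em c + m0 * M * s := by linarith
    nlinarith [hε1, hm0, hM0, hs0]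
  have hquad : (ε1 + m0 * M) * s ≤ (ε1 / 2) * e := by
    have h7 : (ε1 + m0 * M) * s ≤ (ε1 + m0 * M) * ((1/2) * e^2) :=
      mul_le_mul_of_nonneg_left hs_le (by positivity)
    have h8 : (ε1 + m0 * M) * ((1/2) * e^2) = ((ε1 + m0 * M) * e) * ((1/2) * e) := by ring
    have h9 : ((ε1 + m0 * M) * e) * ((1/2) * e) ≤ ε1 * ((1/2) * e) := by
      refine mul_le_mul_of_nonneg_right hδe (by positivity)
    calc (ε1 + m0 * M) * s ≤ ((ε1 + m0 * M) * e) * ((1/2) * e) := by rw [← h8]; exact h7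
      _ ≤ ε1 * ((1/2) * e) := h9
      _ = (ε1 / 2) * e := by ring
  calc (ε1 / 2) * (e + t) = ε1 * (e + t) - (ε1 / 2) * e - (ε1/2) * t := by ring
    _ ≤ ε1 * (e + t) - (ε1 + m0 * M) * s - 0 := by
        have : 0 ≤ (ε1/2) * t := by positivity
        linarith
    _ ≤ Nf S Em c := by linarith

end Rig

/-- Quantitative rigidity estimate for rotations on sets of positive `H^{n-1}` measure. -/
theorem stmt0 (n : ℕ) (hn : 2 ≤ n) (S : Set (EuclideanSpace ℝ (Fin n)))
    (hSb : Bornology.IsBounded S) (hSm : MeasurableSet S)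
    (h0 : 0 < μH[(n : ℝ) - 1] S) (hfin : μH[(n : ℝ) - 1] S < ⊤) :
    ∃ C > (0 : ℝ), ∀ (R : Matrix (Fin n) (Fin n) ℝ) (c : EuclideanSpace ℝ (Fin n)),
      Rᵀ * R = 1 → R.det = 1 →
      frob (R - 1) + ‖c‖ ≤
        C * ∫ x in S, ‖Matrix.toEuclideanLin R x - x - c‖ ∂(μH[(n : ℝ) - 1]) := by
  classical
  open Rig in
  obtain ⟨M₀, hM₀⟩ := isBounded_iff_forall_norm_le.mp hSb
  set M : ℝ := max M₀ 1 with hMd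
  have hM : ∀ x ∈ S, ‖x‖ ≤ M := fun x hx => le_trans (hM₀ x hx) (le_max_left _ _)
  have hM1 : (1:ℝ) ≤ M := le_max_right _ _
  have hM0 : (0:ℝ) ≤ M := by linarith
  set m0 : ℝ := (μH[(n:ℝ)-1] S).toReal with hm0d
  have hm0 : 0 < m0 := ENNReal.toReal_pos (ne_of_gt h0) (ne_of_lt hfin)
  obtain ⟨ε1, hε1, hlin⟩ := Rig.linear_est hn hSm h0 hfin hM hM0
  set δ : ℝ := ε1 / (ε1 + m0 * M) with hδd
  have hδ : 0 < δ := by positivity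
  set Cc : ℝ := 4 * M * Real.sqrt n with hCcd
  have hsqn : (0:ℝ) < Real.sqrt n := Real.sqrt_pos.mpr (by positivity)
  have hCc0 : 0 ≤ Cc := by positivity
  obtain ⟨m2, hm2, hcompact⟩ := Rig.compact_est hn hSm h0 hfin hM hM0 δ Cc hδ hCc0
  set C1 : ℝ := 2 / ε1 with hC1d
  set C2 : ℝ := 4 / m0 with hC2d
  set C3 : ℝ := (2 * Real.sqrt n + Cc) / m2 with hC3d
  set C : ℝ := max (max C1 C2) C3 with hCd
  have hC1 : 0 < C1 := by positivity
  have hC : 0 < C := lt_of_lt_of_le hC1 (le_trans (le_max_left _ _) (le_max_left _ _))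
  refine ⟨C, hC, fun R c hR hdet => ?_⟩
  have hNfeq : Nf S (R - 1) c = ∫ x in S, ‖Matrix.toEuclideanLin R x - x - c‖ ∂(μH[(n:ℝ)-1]) := by
    refine integral_congr_ae (ae_of_all _ fun x => ?_)
    show ‖Matrix.toEuclideanLin (R - 1) x - c‖ = ‖Matrix.toEuclideanLin R x - x - c‖
    rw [Rig.teuc_sub_one]
  rw [← hNfeq]
  set e : ℝ := frob (R - 1) with hed
  set t : ℝ := ‖c‖ with htd
  set I : ℝ := Nf S (R - 1) c with hId
  have hI0 : 0 ≤ I := Rig.Nf_nonneg S _ _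
  have hefin : e ≤ 2 * Real.sqrt n := Rig.frob_orth_sub_one_le hR
  have he0 : 0 ≤ e := Rig.frob_nonneg _
  have ht0 : 0 ≤ t := norm_nonneg _
  by_cases hsmall : e ≤ δ
  · -- small regime
    have h1 : (ε1 / 2) * (e + t) ≤ I :=
      Rig.small_est hSm hfin hM hM0 hε1 hlin R c hR hsmall
    have h2 : e + t ≤ C1 * I := by
      rw [hC1d]
      rw [div_mul_eq_mul_div, le_div_iff₀ hε1]
      linarith
    calc e + t ≤ C1 * I := h2
      _ ≤ C * I := mul_le_mul_of_nonneg_right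
          (le_trans (le_max_left _ _) (le_max_left _ _)) hI0
  · push_neg at hsmall
    by_cases hbigc : t ≤ Cc
    · -- compact regime
      have h1 : m2 ≤ I := hcompact R c hR hdet (le_of_lt hsmall) hbigc
      have h2 : e + t ≤ C3 * m2 := by
        rw [hC3d, div_mul_cancel₀ _ (ne_of_gt hm2)]
        linarith
      have h3 : 0 ≤ C3 := by positivity
      calc e + t ≤ C3 * m2 := h2
        _ ≤ C3 * I := mul_le_mul_of_nonneg_left h1 h3
        _ ≤ C * I := mul_le_mul_of_nonneg_right (le_max_right _ _) hI0
    · -- large translation regime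
      push_neg at hbigc
      have hlb : ∀ x ∈ S, t / 2 ≤ ‖Matrix.toEuclideanLin (R - 1) x - c‖ := by
        intro x hx
        have h1 : ‖Matrix.toEuclideanLin (R - 1) x‖ ≤ e * M :=
          le_trans (Rig.norm_teuc_le _ x)
            (mul_le_mul_of_nonneg_left (hM x hx) he0)
        have h2 : e * M ≤ 2 * Real.sqrt n * M :=
          mul_le_mul_of_nonneg_right hefin hM0
        have h3 : 2 * Real.sqrt n * M ≤ t / 2 := by
          have : Cc = 2 * (2 * Real.sqrt n * M) := by rw [hCcd]; ring
          linarith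
        calc t / 2 = t - t / 2 := by ring
          _ ≤ ‖c‖ - ‖Matrix.toEuclideanLin (R - 1) x‖ := by
              rw [← htd]
              linarith
          _ ≤ ‖Matrix.toEuclideanLin (R - 1) x - c‖ := by
              rw [norm_sub_rev]
              linarith [norm_sub_norm_le (c) (Matrix.toEuclideanLin (R - 1) x)]
      have h4 : m0 * (t / 2) ≤ I := Rig.Nf_ge hSm hfin hM _ _ _ hlb
      have h5 : 2 * Real.sqrt n ≤ t := by
        have : 2 * Real.sqrt n ≤ Cc := by
          rw [hCcd]
          nlinarith [hsqn, hM1]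
        linarith
      have h6 : e + t ≤ 2 * t := by linarith
      have h7 : t ≤ (2 / m0) * I := by
        rw [div_mul_eq_mul_div, le_div_iff₀ hm0]
        linarith
      calc e + t ≤ 2 * t := h6
        _ ≤ 2 * ((2 / m0) * I) := by linarith
        _ = C2 * I := by rw [hC2d]; field_simp; ring
        _ ≤ C * I := mul_le_mul_of_nonneg_right
            (le_trans (le_max_right _ _) (le_max_left _ _)) hI0
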